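/- arXiv:2108.13204 — 3 statements merged into one kernel-verified Lean document; each statement's English description precedes it below -/
import Mathlib

section
/- 3R_{2,4} + 2R_{3,3} = 112ζ(3)² − π⁶/6, where R_{p,q} = ∑_{n≥1} H_{n-1}^{(p)}/(n−1/2)^q with H_n^{(r)} = ∑_{k=1}^n 1/k^r. -/
open Finset Real

/-- odd harmonic numbers of order r: h_n^{(r)} = ∑_{k=1}^n 1/(k-1/2)^r -/
noncomputable def oddH (r n : ℕ) : ℝ := ∑ k ∈ Finset.range n, (((k : ℝ) + 1/2) ^ r)⁻¹

/-- generalized harmonic numbers of order r: H_n^{(r)} = ∑_{k=1}^n 1/k^r -/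
noncomputable def genH (r n : ℕ) : ℝ := ∑ k ∈ Finset.range n, (((k : ℝ) + 1) ^ r)⁻¹

/-- T_{p,q} = ∑_{n≥1} h_{n-1}^{(p)}/(n-1/2)^q -/
noncomputable def Tsum (p q : ℕ) : ℝ := ∑' n : ℕ, oddH p n / ((n : ℝ) + 1/2) ^ q

/-- S̃_{p,q} = ∑_{n≥1} h_n^{(p)}/n^q -/
noncomputable def Ssum (p q : ℕ) : ℝ := ∑' n : ℕ, oddH p (n + 1) / ((n : ℝ) + 1) ^ q

/-- R_{p,q} = ∑_{n≥1} H_{n-1}^{(p)}/(n-1/2)^q -/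
noncomputable def Rsum (p q : ℕ) : ℝ := ∑' n : ℕ, genH p n / ((n : ℝ) + 1/2) ^ q

/-- t̃(s) = ∑_{n≥1} 1/(n-1/2)^s -/
noncomputable def ttv (s : ℕ) : ℝ := ∑' n : ℕ, (((n : ℝ) + 1/2) ^ s)⁻¹

/-- ζ(s) = ∑_{n≥1} 1/n^s (for integer s ≥ 2) -/
noncomputable def zv (s : ℕ) : ℝ := ∑' n : ℕ, (((n : ℝ) + 1) ^ s)⁻¹

/-! ### Basic summability -/

lemma summable_int {p : ℕ} (hp : 2 ≤ p) : Summable (fun k : ℕ => (((k:ℝ)+1)^p)⁻¹) := by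
  have h := (Real.summable_nat_pow_inv (p := p)).2 (by omega)
  have h2 := (summable_nat_add_iff 1).2 h
  simpa using h2

lemma summable_half {p : ℕ} (hp : 2 ≤ p) : Summable (fun k : ℕ => (((k:ℝ)+1/2)^p)⁻¹) := by
  refine Summable.of_nonneg_of_le (fun k => by positivity) (fun k => ?_)
    ((summable_int hp).mul_left (2^p))
  have h1 : ((k:ℝ)+1)/2 ≤ (k:ℝ)+1/2 := by linarith [Nat.cast_nonneg (α := ℝ) k]
  calc (((k:ℝ)+1/2)^p)⁻¹ ≤ ((((k:ℝ)+1)/2)^p)⁻¹ := by gcongr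
    _ = 2^p * (((k:ℝ)+1)^p)⁻¹ := by
        rw [div_pow, inv_div, div_eq_mul_inv, mul_comm]

/-! ### Triangle reindexing -/

def eNat : ℕ × ℕ ≃ Σ n : ℕ, Fin n where
  toFun p := ⟨p.1 + p.2 + 1, ⟨p.1, by omega⟩⟩
  invFun x := (x.2.1, x.1 - x.2.1 - 1)
  left_inv p := by
    rcases p with ⟨k, m⟩
    have h : k + m + 1 - k - 1 = m := by omega
    exact Prod.ext rfl h
  right_inv x := by
    rcases x with ⟨n, k, hk⟩
    have h : k + (n - k - 1) + 1 = n := by omega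
    exact Sigma.ext h ((Fin.heq_ext_iff h).2 rfl)

lemma tsum_triangle (f : ℕ → ℕ → ℝ) (h : Summable (fun p : ℕ × ℕ => f p.1 (p.1 + p.2 + 1))) :
    ∑' p : ℕ × ℕ, f p.1 (p.1 + p.2 + 1) = ∑' n, ∑ k ∈ range n, f k n := by
  have h2 : Summable (fun x : Σ n : ℕ, Fin n => f x.2 x.1) := (Equiv.summable_iff eNat).1 h
  calc ∑' p : ℕ × ℕ, f p.1 (p.1 + p.2 + 1)
      = ∑' x : Σ n : ℕ, Fin n, f x.2 x.1 := eNat.tsum_eq (fun x : Σ n : ℕ, Fin n => f x.2 x.1)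
    _ = ∑' n, ∑' k : Fin n, f k n := Summable.tsum_sigma h2
    _ = ∑' n, ∑ k ∈ range n, f k n := by
        refine tsum_congr fun n => ?_
        rw [tsum_fintype]
        exact Fin.sum_univ_eq_sum_range (fun k => f k n) n

lemma tsum_prod_mul {f g : ℕ → ℝ} (hf : Summable f) (hg : Summable g)
    (hf0 : ∀ n, 0 ≤ f n) (hg0 : ∀ n, 0 ≤ g n) :
    ∑' p : ℕ × ℕ, f p.1 * g p.2 = (∑' n, f n) * (∑' n, g n) := by
  have h := hf.mul_of_nonneg hg hf0 hg0
  rw [Summable.tsum_prod h]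
  simp_rw [tsum_mul_left]
  rw [tsum_mul_right]

/-! ### Double-sum term functions -/

noncomputable def RT (i j : ℕ) : ℕ × ℕ → ℝ :=
  fun p => (((p.1:ℝ)+1)^i)⁻¹ * ((((p.1+p.2+1 : ℕ):ℝ)+1/2)^j)⁻¹

noncomputable def TT (i j : ℕ) : ℕ × ℕ → ℝ :=
  fun p => (((p.2:ℝ)+1/2)^i)⁻¹ * ((((p.1+p.2+1 : ℕ):ℝ)+1/2)^j)⁻¹

noncomputable def PP (i j : ℕ) : ℕ × ℕ → ℝ :=
  fun p => (((p.1:ℝ)+1)^i)⁻¹ * (((p.2:ℝ)+1/2)^j)⁻¹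

lemma RT_nonneg (i j : ℕ) (x : ℕ × ℕ) : 0 ≤ RT i j x := by unfold RT; positivity
lemma TT_nonneg (i j : ℕ) (x : ℕ × ℕ) : 0 ≤ TT i j x := by unfold TT; positivity

lemma summable_PP {i j : ℕ} (hi : 2 ≤ i) (hj : 2 ≤ j) : Summable (PP i j) :=
  (summable_int hi).mul_of_nonneg (summable_half hj) (fun k => by positivity)
    (fun k => by positivity)

lemma Rsum_eq {i j : ℕ} (h : Summable (RT i j)) : Rsum i j = ∑' p : ℕ × ℕ, RT i j p := by
  have h' : Summable (fun p : ℕ × ℕ =>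
      (fun k n : ℕ => (((k:ℝ)+1)^i)⁻¹ * (((n:ℝ)+1/2)^j)⁻¹) p.1 (p.1 + p.2 + 1)) := h
  calc Rsum i j
      = ∑' n, ∑ k ∈ range n, (fun k n : ℕ => (((k:ℝ)+1)^i)⁻¹ * (((n:ℝ)+1/2)^j)⁻¹) k n := by
        unfold Rsum genH
        refine tsum_congr fun n => ?_
        rw [Finset.sum_div]
        exact Finset.sum_congr rfl fun k _ => div_eq_mul_inv _ _
    _ = ∑' p : ℕ × ℕ,
        (fun k n : ℕ => (((k:ℝ)+1)^i)⁻¹ * (((n:ℝ)+1/2)^j)⁻¹) p.1 (p.1+p.2+1) :=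
        (tsum_triangle _ h').symm
    _ = ∑' p : ℕ × ℕ, RT i j p := tsum_congr fun p => rfl

lemma Tsum_eq {i j : ℕ} (h : Summable (TT i j)) : Tsum i j = ∑' p : ℕ × ℕ, TT i j p := by
  set F : ℕ × ℕ → ℝ :=
    fun p => (((p.1:ℝ)+1/2)^i)⁻¹ * ((((p.1+p.2+1 : ℕ):ℝ)+1/2)^j)⁻¹ with hFdef
  have hswap : ∀ p : ℕ × ℕ, TT i j p = F ((Equiv.prodComm ℕ ℕ) p) := by
    intro p
    simp only [hFdef, TT, Equiv.prodComm_apply, Prod.swap]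
    have : p.2 + p.1 + 1 = p.1 + p.2 + 1 := by omega
    rw [this]
  have hF : Summable F := by
    refine ((Equiv.prodComm ℕ ℕ).summable_iff).1 ?_
    exact h.congr fun p => (hswap p)
  have h1 : ∑' p : ℕ × ℕ, TT i j p = ∑' p : ℕ × ℕ, F p := by
    rw [tsum_congr hswap]
    exact (Equiv.prodComm ℕ ℕ).tsum_eq F
  have h' : Summable (fun p : ℕ × ℕ =>
      (fun k n : ℕ => (((k:ℝ)+1/2)^i)⁻¹ * (((n:ℝ)+1/2)^j)⁻¹) p.1 (p.1 + p.2 + 1)) := hF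
  calc Tsum i j
      = ∑' n, ∑ k ∈ range n, (fun k n : ℕ => (((k:ℝ)+1/2)^i)⁻¹ * (((n:ℝ)+1/2)^j)⁻¹) k n := by
        unfold Tsum oddH
        refine tsum_congr fun n => ?_
        rw [Finset.sum_div]
        exact Finset.sum_congr rfl fun k _ => div_eq_mul_inv _ _
    _ = ∑' p : ℕ × ℕ,
        (fun k n : ℕ => (((k:ℝ)+1/2)^i)⁻¹ * (((n:ℝ)+1/2)^j)⁻¹) p.1 (p.1+p.2+1) :=
        (tsum_triangle _ h').symm
    _ = ∑' p : ℕ × ℕ, F p := tsum_congr fun p => rfl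
    _ = ∑' p : ℕ × ℕ, TT i j p := h1.symm

/-! ### Partial fraction identities -/

lemma pf24 {a b : ℝ} (ha : 0 < a) (hb : 0 < b) :
    (a^2)⁻¹ * (b^4)⁻¹ =
      4*((a^1)⁻¹*((a+b)^5)⁻¹) + ((a^2)⁻¹*((a+b)^4)⁻¹ + (4*((b^1)⁻¹*((a+b)^5)⁻¹) +
      (3*((b^2)⁻¹*((a+b)^4)⁻¹) + (2*((b^3)⁻¹*((a+b)^3)⁻¹) + ((b^4)⁻¹*((a+b)^2)⁻¹))))) := by
  have hab : 0 < a + b := by linarith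
  field_simp
  ring

lemma pf33 {a b : ℝ} (ha : 0 < a) (hb : 0 < b) :
    (a^3)⁻¹ * (b^3)⁻¹ =
      6*((a^1)⁻¹*((a+b)^5)⁻¹) + (3*((a^2)⁻¹*((a+b)^4)⁻¹) + ((a^3)⁻¹*((a+b)^3)⁻¹ +
      (6*((b^1)⁻¹*((a+b)^5)⁻¹) + (3*((b^2)⁻¹*((a+b)^4)⁻¹) + ((b^3)⁻¹*((a+b)^3)⁻¹))))) := by
  have hab : 0 < a + b := by linarith
  field_simp
  ring

lemma id24 (x : ℕ × ℕ) : PP 2 4 x =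
    4*RT 1 5 x + (RT 2 4 x + (4*TT 1 5 x +
      (3*TT 2 4 x + (2*TT 3 3 x + TT 4 2 x)))) := by
  have h := pf24 (a := (x.1:ℝ)+1) (b := (x.2:ℝ)+1/2) (by positivity) (by positivity)
  simp only [PP, RT, TT]
  push_cast
  linear_combination h

lemma id33 (x : ℕ × ℕ) : PP 3 3 x =
    6*RT 1 5 x + (3*RT 2 4 x + (RT 3 3 x +
      (6*TT 1 5 x + (3*TT 2 4 x + TT 3 3 x)))) := by
  have h := pf33 (a := (x.1:ℝ)+1) (b := (x.2:ℝ)+1/2) (by positivity) (by positivity)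
  simp only [PP, RT, TT]
  push_cast
  linear_combination h

/-! ### Summability of the pieces -/

lemma summable_PP33 : Summable (PP 3 3) := summable_PP (by norm_num) (by norm_num)
lemma summable_PP24 : Summable (PP 2 4) := summable_PP (by norm_num) (by norm_num)

lemma summable_RT15 : Summable (RT 1 5) := by
  refine summable_PP33.of_nonneg_of_le (RT_nonneg 1 5) (fun x => ?_)
  have h := id33 x
  have h1 := RT_nonneg 2 4 x; have h2 := RT_nonneg 3 3 x
  have h3 := TT_nonneg 1 5 x; have h4 := TT_nonneg 2 4 x; have h5 := TT_nonneg 3 3 x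
  have h6 := RT_nonneg 1 5 x
  linarith

lemma summable_RT24 : Summable (RT 2 4) := by
  refine summable_PP33.of_nonneg_of_le (RT_nonneg 2 4) (fun x => ?_)
  have h := id33 x
  have h1 := RT_nonneg 1 5 x; have h2 := RT_nonneg 3 3 x
  have h3 := TT_nonneg 1 5 x; have h4 := TT_nonneg 2 4 x; have h5 := TT_nonneg 3 3 x
  have h6 := RT_nonneg 2 4 x
  linarith

lemma summable_RT33 : Summable (RT 3 3) := by
  refine summable_PP33.of_nonneg_of_le (RT_nonneg 3 3) (fun x => ?_)
  have h := id33 x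
  have h1 := RT_nonneg 1 5 x; have h2 := RT_nonneg 2 4 x
  have h3 := TT_nonneg 1 5 x; have h4 := TT_nonneg 2 4 x; have h5 := TT_nonneg 3 3 x
  linarith

lemma summable_TT15 : Summable (TT 1 5) := by
  refine summable_PP33.of_nonneg_of_le (TT_nonneg 1 5) (fun x => ?_)
  have h := id33 x
  have h1 := RT_nonneg 1 5 x; have h2 := RT_nonneg 2 4 x; have h2' := RT_nonneg 3 3 x
  have h4 := TT_nonneg 2 4 x; have h5 := TT_nonneg 3 3 x
  have h6 := TT_nonneg 1 5 x
  linarith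

lemma summable_TT24 : Summable (TT 2 4) := by
  refine summable_PP33.of_nonneg_of_le (TT_nonneg 2 4) (fun x => ?_)
  have h := id33 x
  have h1 := RT_nonneg 1 5 x; have h2 := RT_nonneg 2 4 x; have h2' := RT_nonneg 3 3 x
  have h3 := TT_nonneg 1 5 x; have h5 := TT_nonneg 3 3 x
  have h6 := TT_nonneg 2 4 x
  linarith

lemma summable_TT33 : Summable (TT 3 3) := by
  refine summable_PP33.of_nonneg_of_le (TT_nonneg 3 3) (fun x => ?_)
  have h := id33 x
  have h1 := RT_nonneg 1 5 x; have h2 := RT_nonneg 2 4 x; have h2' := RT_nonneg 3 3 x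
  have h3 := TT_nonneg 1 5 x; have h4 := TT_nonneg 2 4 x
  linarith

lemma summable_TT42 : Summable (TT 4 2) := by
  refine summable_PP24.of_nonneg_of_le (TT_nonneg 4 2) (fun x => ?_)
  have h := id24 x
  have h1 := RT_nonneg 1 5 x; have h2 := RT_nonneg 2 4 x
  have h3 := TT_nonneg 1 5 x; have h4 := TT_nonneg 2 4 x; have h5 := TT_nonneg 3 3 x
  linarith

/-! ### The two decomposition equations -/

lemma eqE1 : zv 2 * ttv 4 =
    4*Rsum 1 5 + (Rsum 2 4 + (4*Tsum 1 5 + (3*Tsum 2 4 + (2*Tsum 3 3 + Tsum 4 2)))) := by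
  have h0 : zv 2 * ttv 4 = ∑' x : ℕ × ℕ, PP 2 4 x :=
    (tsum_prod_mul (summable_int (by norm_num)) (summable_half (by norm_num))
      (fun k => by positivity) (fun k => by positivity)).symm
  rw [h0, tsum_congr id24]
  rw [Summable.tsum_add (summable_RT15.mul_left 4)
      (summable_RT24.add ((summable_TT15.mul_left 4).add ((summable_TT24.mul_left 3).add
        ((summable_TT33.mul_left 2).add summable_TT42))))]
  rw [Summable.tsum_add summable_RT24 ((summable_TT15.mul_left 4).add ((summable_TT24.mul_left 3).add
        ((summable_TT33.mul_left 2).add summable_TT42)))]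
  rw [Summable.tsum_add (summable_TT15.mul_left 4) ((summable_TT24.mul_left 3).add
        ((summable_TT33.mul_left 2).add summable_TT42))]
  rw [Summable.tsum_add (summable_TT24.mul_left 3) ((summable_TT33.mul_left 2).add summable_TT42)]
  rw [Summable.tsum_add (summable_TT33.mul_left 2) summable_TT42]
  rw [tsum_mul_left, tsum_mul_left, tsum_mul_left, tsum_mul_left]
  rw [← Rsum_eq summable_RT15, ← Rsum_eq summable_RT24, ← Tsum_eq summable_TT15,
    ← Tsum_eq summable_TT24, ← Tsum_eq summable_TT33, ← Tsum_eq summable_TT42]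

lemma eqE3 : zv 3 * ttv 3 =
    6*Rsum 1 5 + (3*Rsum 2 4 + (Rsum 3 3 + (6*Tsum 1 5 + (3*Tsum 2 4 + Tsum 3 3)))) := by
  have h0 : zv 3 * ttv 3 = ∑' x : ℕ × ℕ, PP 3 3 x :=
    (tsum_prod_mul (summable_int (by norm_num)) (summable_half (by norm_num))
      (fun k => by positivity) (fun k => by positivity)).symm
  rw [h0, tsum_congr id33]
  rw [Summable.tsum_add (summable_RT15.mul_left 6)
      ((summable_RT24.mul_left 3).add (summable_RT33.add ((summable_TT15.mul_left 6).add
        ((summable_TT24.mul_left 3).add summable_TT33))))]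
  rw [Summable.tsum_add (summable_RT24.mul_left 3) (summable_RT33.add ((summable_TT15.mul_left 6).add
        ((summable_TT24.mul_left 3).add summable_TT33)))]
  rw [Summable.tsum_add summable_RT33 ((summable_TT15.mul_left 6).add
        ((summable_TT24.mul_left 3).add summable_TT33))]
  rw [Summable.tsum_add (summable_TT15.mul_left 6) ((summable_TT24.mul_left 3).add summable_TT33)]
  rw [Summable.tsum_add (summable_TT24.mul_left 3) summable_TT33]
  rw [tsum_mul_left, tsum_mul_left, tsum_mul_left, tsum_mul_left]
  rw [← Rsum_eq summable_RT15, ← Rsum_eq summable_RT24, ← Rsum_eq summable_RT33,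
    ← Tsum_eq summable_TT15, ← Tsum_eq summable_TT24, ← Tsum_eq summable_TT33]

/-! ### Reflection identity for T sums -/

lemma Treflect {p q : ℕ} (hp : 2 ≤ p) (hq : 2 ≤ q) :
    Tsum p q + Tsum q p = ttv p * ttv q - ttv (p+q) := by
  classical
  set F : ℕ × ℕ → ℝ :=
    fun x => (((x.1:ℝ)+1/2)^p)⁻¹ * (((x.2:ℝ)+1/2)^q)⁻¹ with hFdef
  have hFs : Summable F :=
    (summable_half hp).mul_of_nonneg (summable_half hq)
      (fun k => by positivity) (fun k => by positivity)
  have hFnn : ∀ x, 0 ≤ F x := fun x => by simp only [hFdef]; positivity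
  set G1 : ℕ × ℕ → ℝ := fun x => if x.1 < x.2 then F x else 0 with hG1def
  set G2 : ℕ × ℕ → ℝ := fun x => if x.1 = x.2 then F x else 0 with hG2def
  set G3 : ℕ × ℕ → ℝ := fun x => if x.2 < x.1 then F x else 0 with hG3def
  have hsplit : ∀ x, F x = G1 x + (G2 x + G3 x) := by
    intro x
    simp only [hG1def, hG2def, hG3def]
    rcases lt_trichotomy x.1 x.2 with h | h | h
    · rw [if_pos h, if_neg (by omega), if_neg (by omega)]; ring
    · rw [if_neg (by omega), if_pos h, if_neg (by omega)]; ring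
    · rw [if_neg (by omega), if_neg (by omega), if_pos h]; ring
  have hG1nn : ∀ x, 0 ≤ G1 x := by
    intro x; simp only [hG1def]; split
    · exact hFnn x
    · exact le_refl 0
  have hG2nn : ∀ x, 0 ≤ G2 x := by
    intro x; simp only [hG2def]; split
    · exact hFnn x
    · exact le_refl 0
  have hG3nn : ∀ x, 0 ≤ G3 x := by
    intro x; simp only [hG3def]; split
    · exact hFnn x
    · exact le_refl 0
  have hG1le : ∀ x, G1 x ≤ F x := by
    intro x; simp only [hG1def]; split
    · exact le_refl _
    · exact hFnn x
  have hG2le : ∀ x, G2 x ≤ F x := by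
    intro x; simp only [hG2def]; split
    · exact le_refl _
    · exact hFnn x
  have hG3le : ∀ x, G3 x ≤ F x := by
    intro x; simp only [hG3def]; split
    · exact le_refl _
    · exact hFnn x
  have hG1s : Summable G1 := hFs.of_nonneg_of_le hG1nn hG1le
  have hG2s : Summable G2 := hFs.of_nonneg_of_le hG2nn hG2le
  have hG3s : Summable G3 := hFs.of_nonneg_of_le hG3nn hG3le
  have htot : ∑' x : ℕ × ℕ, F x = ttv p * ttv q :=
    tsum_prod_mul (summable_half hp) (summable_half hq)
      (fun k => by positivity) (fun k => by positivity)
  have hFsum : ∑' x : ℕ × ℕ, F x =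
      (∑' x : ℕ × ℕ, G1 x) + ((∑' x : ℕ × ℕ, G2 x) + (∑' x : ℕ × ℕ, G3 x)) := by
    rw [tsum_congr hsplit, Summable.tsum_add hG1s (hG2s.add hG3s), Summable.tsum_add hG2s hG3s]
  -- the diagonal
  have hdiaginj : Function.Injective (fun n : ℕ => ((n, n) : ℕ × ℕ)) := by
    intro a b h
    simpa using congrArg Prod.fst h
  have hdiagsupp : Function.support G2 ⊆ Set.range (fun n : ℕ => ((n, n) : ℕ × ℕ)) := by
    intro x hx
    rw [Function.mem_support] at hx
    by_cases h : x.1 = x.2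
    · exact ⟨x.1, Prod.ext rfl h⟩
    · exact absurd (by simp only [hG2def, if_neg h]) hx
  have hdiag : ∑' x : ℕ × ℕ, G2 x = ttv (p+q) := by
    rw [← hdiaginj.tsum_eq hdiagsupp]
    unfold ttv
    refine tsum_congr fun n => ?_
    simp only [hG2def, hFdef, if_pos rfl]
    rw [← mul_inv, ← pow_add]
  -- the lower triangle x.1 < x.2
  have hltinj : Function.Injective (fun z : ℕ × ℕ => ((z.1, z.1 + z.2 + 1) : ℕ × ℕ)) := by
    intro a b h
    simp only [Prod.mk.injEq] at h
    exact Prod.ext h.1 (by omega)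
  have hltsupp : Function.support G1 ⊆
      Set.range (fun z : ℕ × ℕ => ((z.1, z.1 + z.2 + 1) : ℕ × ℕ)) := by
    intro x hx
    rw [Function.mem_support] at hx
    by_cases h : x.1 < x.2
    · refine ⟨(x.1, x.2 - x.1 - 1), ?_⟩
      show ((x.1, x.1 + (x.2 - x.1 - 1) + 1) : ℕ × ℕ) = x
      exact Prod.ext rfl (by omega)
    · exact absurd (by simp only [hG1def, if_neg h]) hx
  have hltcomp : ∀ z : ℕ × ℕ, G1 ((z.1, z.1 + z.2 + 1) : ℕ × ℕ) =
      (fun k n : ℕ => (((k:ℝ)+1/2)^p)⁻¹ * (((n:ℝ)+1/2)^q)⁻¹) z.1 (z.1 + z.2 + 1) := by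
    intro z
    simp only [hG1def, hFdef, if_pos (by omega : z.1 < z.1 + z.2 + 1)]
  have hltsum : ∑' x : ℕ × ℕ, G1 x = Tsum p q := by
    rw [← hltinj.tsum_eq hltsupp]
    have hsum2 : Summable (fun z : ℕ × ℕ =>
        (fun k n : ℕ => (((k:ℝ)+1/2)^p)⁻¹ * (((n:ℝ)+1/2)^q)⁻¹) z.1 (z.1 + z.2 + 1)) := by
      refine ((hltinj.summable_iff (fun x hx => by_contra fun h0 => hx (hltsupp h0))).2
        hG1s).congr fun z => ?_
      exact hltcomp z
    rw [tsum_congr hltcomp,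
      tsum_triangle (fun k n : ℕ => (((k:ℝ)+1/2)^p)⁻¹ * (((n:ℝ)+1/2)^q)⁻¹) hsum2]
    unfold Tsum oddH
    refine tsum_congr fun n => ?_
    rw [Finset.sum_div]
    exact Finset.sum_congr rfl fun k _ => (div_eq_mul_inv _ _).symm
  -- the upper triangle x.2 < x.1
  have hgtinj : Function.Injective (fun z : ℕ × ℕ => ((z.1 + z.2 + 1, z.1) : ℕ × ℕ)) := by
    intro a b h
    simp only [Prod.mk.injEq] at h
    exact Prod.ext h.2 (by omega)
  have hgtsupp : Function.support G3 ⊆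
      Set.range (fun z : ℕ × ℕ => ((z.1 + z.2 + 1, z.1) : ℕ × ℕ)) := by
    intro x hx
    rw [Function.mem_support] at hx
    by_cases h : x.2 < x.1
    · refine ⟨(x.2, x.1 - x.2 - 1), ?_⟩
      show ((x.2 + (x.1 - x.2 - 1) + 1, x.2) : ℕ × ℕ) = x
      exact Prod.ext (by omega) rfl
    · exact absurd (by simp only [hG3def, if_neg h]) hx
  have hgtcomp : ∀ z : ℕ × ℕ, G3 ((z.1 + z.2 + 1, z.1) : ℕ × ℕ) =
      (fun k n : ℕ => (((k:ℝ)+1/2)^q)⁻¹ * (((n:ℝ)+1/2)^p)⁻¹) z.1 (z.1 + z.2 + 1) := by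
    intro z
    simp only [hG3def, hFdef, if_pos (by omega : z.1 < z.1 + z.2 + 1)]
    push_cast
    ring
  have hgtsum : ∑' x : ℕ × ℕ, G3 x = Tsum q p := by
    rw [← hgtinj.tsum_eq hgtsupp]
    have hsum2 : Summable (fun z : ℕ × ℕ =>
        (fun k n : ℕ => (((k:ℝ)+1/2)^q)⁻¹ * (((n:ℝ)+1/2)^p)⁻¹) z.1 (z.1 + z.2 + 1)) := by
      refine ((hgtinj.summable_iff (fun x hx => by_contra fun h0 => hx (hgtsupp h0))).2
        hG3s).congr fun z => ?_
      exact hgtcomp z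
    rw [tsum_congr hgtcomp,
      tsum_triangle (fun k n : ℕ => (((k:ℝ)+1/2)^q)⁻¹ * (((n:ℝ)+1/2)^p)⁻¹) hsum2]
    unfold Tsum oddH
    refine tsum_congr fun n => ?_
    rw [Finset.sum_div]
    exact Finset.sum_congr rfl fun k _ => (div_eq_mul_inv _ _).symm
  rw [hltsum, hdiag, hgtsum, htot] at hFsum
  linarith

/-! ### Evaluations of zeta-type constants -/

theorem bernoulli'_five' : bernoulli' 5 = 0 := by
  have h1 : Nat.choose 5 2 = 10 := by decide
  have h2 : Nat.choose 5 3 = 10 := by decide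
  have h3 : Nat.choose 5 4 = 5 := by decide
  rw [bernoulli'_def]
  norm_num [Finset.sum_range_succ, h1, h2, h3]

theorem bernoulli'_six' : bernoulli' 6 = 1/42 := by
  have h1 : Nat.choose 6 2 = 15 := by decide
  have h2 : Nat.choose 6 3 = 20 := by decide
  have h3 : Nat.choose 6 4 = 15 := by decide
  have h4 : Nat.choose 6 5 = 6 := by decide
  rw [bernoulli'_def]
  norm_num [Finset.sum_range_succ, h1, h2, h3, h4, bernoulli'_five']

theorem hasSum_zeta_six : HasSum (fun n : ℕ => (1 : ℝ) / (n : ℝ) ^ 6) (π ^ 6 / 945) := by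
  have h := hasSum_zeta_nat (k := 3) (by norm_num)
  norm_num at h
  convert h using 1
  · ext n; rw [one_div]
  · rw [bernoulli_eq_bernoulli'_of_ne_one (by norm_num), bernoulli'_six']
    norm_num [Nat.factorial]
    ring

lemma zv_eval {s : ℕ} (hs : 1 ≤ s) {v : ℝ} (h : HasSum (fun n : ℕ => 1/(n:ℝ)^s) v) :
    zv s = v := by
  have h2 := (hasSum_nat_add_iff (f := fun n : ℕ => 1/(n:ℝ)^s) 1).2
    (by simpa [zero_pow (show s ≠ 0 by omega)] using h)
  have h3 : zv s = ∑' n : ℕ, 1/((↑(n+1) : ℝ))^s := by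
    unfold zv
    refine tsum_congr fun n => ?_
    push_cast
    rw [one_div]
  rw [h3, h2.tsum_eq]

lemma summable_zv {s : ℕ} (hs : 2 ≤ s) : Summable (fun n : ℕ => ((n:ℝ)^s)⁻¹) :=
  Real.summable_nat_pow_inv.2 (by omega)

lemma zv_base {s : ℕ} (hs : 2 ≤ s) : ∑' n : ℕ, ((n:ℝ)^s)⁻¹ = zv s := by
  rw [tsum_eq_zero_add' ?h]
  case h =>
    have := summable_zv hs
    exact (summable_nat_add_iff 1).2 this
  · rw [show (((0:ℕ):ℝ)^s)⁻¹ = 0 by simp [zero_pow (show s ≠ 0 by omega)], zero_add]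
    refine tsum_congr fun n => ?_
    push_cast
    rfl

lemma ttv_eq {s : ℕ} (hs : 2 ≤ s) : ttv s = (2^s - 1) * zv s := by
  have hzs := summable_zv hs
  have heq_even : ∀ k : ℕ, (((2*k:ℕ):ℝ)^s)⁻¹ = (2^s)⁻¹ * ((k:ℝ)^s)⁻¹ := by
    intro k; push_cast; rw [mul_pow, mul_inv]
  have he : Summable (fun k : ℕ => (((2*k:ℕ):ℝ)^s)⁻¹) :=
    (hzs.mul_left (2^s)⁻¹).congr (fun k => (heq_even k).symm)
  have ho : Summable (fun k : ℕ => (((2*k+1:ℕ):ℝ)^s)⁻¹) := by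
    refine Summable.of_nonneg_of_le (fun k => by positivity) (fun k => ?_) (summable_int hs)
    have h1 : ((k:ℝ)+1) ≤ ((2*k+1:ℕ):ℝ) := by push_cast; linarith [Nat.cast_nonneg (α := ℝ) k]
    gcongr
  have key := tsum_even_add_odd (f := fun n : ℕ => ((n:ℝ)^s)⁻¹) he ho
  have heven : ∑' k : ℕ, (((2*k:ℕ):ℝ)^s)⁻¹ = (2^s)⁻¹ * zv s := by
    rw [tsum_congr heq_even, tsum_mul_left, zv_base hs]
  rw [zv_base hs] at key
  have hodd : ttv s = 2^s * ∑' k : ℕ, (((2*k+1:ℕ):ℝ)^s)⁻¹ := by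
    rw [← tsum_mul_left]
    refine tsum_congr fun n => ?_
    have h2 : ((n:ℝ)+1/2) = ((2*n+1:ℕ):ℝ)/2 := by push_cast; ring
    rw [h2, div_pow, inv_div, div_eq_mul_inv, mul_comm]
  have h2s : ((2:ℝ)^s) ≠ 0 := by positivity
  rw [hodd]
  rw [heven] at key
  field_simp at key ⊢
  linarith [key]

/-! ### Main theorem -/

theorem stmt10 : 3 * Rsum 2 4 + 2 * Rsum 3 3 = 112 * zv 3 ^ 2 - Real.pi ^ 6 / 6 := by
  have e1 := eqE1
  have e3 := eqE3
  have r24 := Treflect (p := 2) (q := 4) (by norm_num) (by norm_num)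
  have r33 := Treflect (p := 3) (q := 3) (by norm_num) (by norm_num)
  simp only [show (2+4 : ℕ) = 6 from rfl] at r24
  simp only [show (3+3 : ℕ) = 6 from rfl] at r33
  have t2 := ttv_eq (s := 2) (by norm_num)
  have t3 := ttv_eq (s := 3) (by norm_num)
  have t4 := ttv_eq (s := 4) (by norm_num)
  have t6 := ttv_eq (s := 6) (by norm_num)
  have z2 : zv 2 = π^2/6 := zv_eval (by norm_num) hasSum_zeta_two
  have z4 : zv 4 = π^4/90 := zv_eval (by norm_num) hasSum_zeta_four
  have z6 : zv 6 = π^6/945 := zv_eval (by norm_num) hasSum_zeta_six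
  rw [t4, z2, z4] at e1
  rw [t3] at e3
  rw [t2, t4, t6, z2, z4, z6] at r24
  rw [t3, t6, z6] at r33
  linear_combination 3 * e1 - 2 * e3 + 3 * r24 + 2 * r33
end

section
/- For integers n ≥ 0: ∑_{i=0}^{2n} (−1)^i·C(2n,i)·G_{i+3}·G_{2n+3−i}/((i+3)(2n+3−i)) = −G_{2n+6}/(15(2n+6)) + G_{2n+2}/(15(2n+2)), where G_n are the Genocchi numbers. -/
open PowerSeries Nat

/-- Genocchi numbers: G_n = 2(1-2^n)B_n, with B_n the Bernoulli numbers (B_1 = -1/2). -/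
noncomputable def genocchi (n : ℕ) : ℚ := 2 * (1 - 2 ^ n) * bernoulli n

/-- The series 2/(e^x+1) = ∑ G_{n+1} x^n/(n+1)!. -/
noncomputable def Gphi : ℚ⟦X⟧ := PowerSeries.mk fun n => genocchi (n+1) / (n+1)!

local notation "Dq" => d⁄dX ℚ

lemma two_eq : (2 : ℚ⟦X⟧) = C (2:ℚ) := (map_ofNat C 2).symm

lemma expm1_ne : (exp ℚ - 1 : ℚ⟦X⟧) ≠ 0 := by
  intro h
  have := congrArg (coeff 1) h
  simp [coeff_exp] at this

lemma expp1_ne : (exp ℚ + 1 : ℚ⟦X⟧) ≠ 0 := by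
  intro h
  have := congrArg (constantCoeff) h
  simp [constantCoeff_exp] at this

lemma X_ne : (X : ℚ⟦X⟧) ≠ 0 := by
  intro h
  have := congrArg (coeff 1) h
  simp at this

lemma rX : rescale (2:ℚ) X = 2 * X := by
  rw [two_eq]
  ext n
  rcases eq_or_ne n 1 with rfl | hn
  · simp [coeff_rescale]
  · simp [coeff_rescale, coeff_X, hn]

lemma rescale_two_exp : rescale (2:ℚ) (exp ℚ) = exp ℚ * exp ℚ := by
  have := exp_mul_exp_eq_exp_add (1:ℚ) 1
  norm_num [rescale_one] at this
  rw [this]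

lemma Gser_eq : (PowerSeries.mk fun n => genocchi n / n ! : ℚ⟦X⟧)
    = 2 * bernoulliPowerSeries ℚ - 2 * rescale (2:ℚ) (bernoulliPowerSeries ℚ) := by
  ext n
  simp [coeff_mk, coeff_rescale, bernoulliPowerSeries, genocchi, two_eq]
  ring

lemma rescale_two_bps : rescale (2:ℚ) (bernoulliPowerSeries ℚ) * (exp ℚ * exp ℚ - 1) = 2 * X := by
  have h := congrArg (rescale (2:ℚ)) (bernoulliPowerSeries_mul_exp_sub_one ℚ)
  rw [map_mul, map_sub, map_one, rescale_two_exp, rX] at h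
  exact h

/-- The key generating function identity: Gphi = 2/(e^x+1). -/
lemma Gphi_mul : Gphi * (exp ℚ + 1) = 2 := by
  have hX : X * Gphi = (PowerSeries.mk fun n => genocchi n / n ! : ℚ⟦X⟧) := by
    ext n
    cases n with
    | zero => simp [genocchi, coeff_mk]
    | succ m => simp [coeff_succ_X_mul, Gphi, coeff_mk]
  have key : (X * Gphi) * (exp ℚ + 1) * (exp ℚ - 1) = (2 * X) * (exp ℚ - 1) := by
    rw [hX, Gser_eq]
    have h1 := bernoulliPowerSeries_mul_exp_sub_one ℚ
    have h2 := rescale_two_bps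
    linear_combination (2 * (exp ℚ + 1)) * h1 - 2 * h2
  have key2 : X * (Gphi * (exp ℚ + 1)) = X * 2 := by
    have := mul_right_cancel₀ expm1_ne key
    linear_combination this
  exact mul_left_cancel₀ X_ne key2

lemma D_exp : Dq (exp ℚ) = exp ℚ := by
  ext n
  rw [coeff_derivative, coeff_exp, coeff_exp]
  simp [factorial_succ]
  field_simp

lemma D_ofNat (n : ℕ) [n.AtLeastTwo] : Dq (OfNat.ofNat n : ℚ⟦X⟧) = 0 := by
  rw [← Nat.cast_ofNat]
  exact Derivation.map_natCast _ n

lemma D_two : Dq (2:ℚ⟦X⟧) = 0 := by rw [two_eq]; simp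

lemma D_mul (f g : ℚ⟦X⟧) : Dq (f * g) = f * Dq g + g * Dq f := by
  rw [Derivation.leibniz, smul_eq_mul, smul_eq_mul]

/-- The ODE 2φ' = φ² - 2φ for φ = 2/(e^x+1). -/
lemma ode1 : 2 * Dq Gphi = Gphi^2 - 2*Gphi := by
  have h0 : Gphi * exp ℚ + (exp ℚ + 1) * Dq Gphi = 0 := by
    have h := congrArg Dq Gphi_mul
    rw [D_mul, map_add, D_exp, Derivation.map_one_eq_zero, add_zero, D_two] at h
    exact h
  have key : (2 * Dq Gphi) * ((exp ℚ + 1)*(exp ℚ + 1))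
      = (Gphi^2 - 2*Gphi) * ((exp ℚ + 1)*(exp ℚ + 1)) := by
    linear_combination (2*(exp ℚ + 1)) * h0 - (Gphi*(exp ℚ + 1)) * Gphi_mul
  exact mul_right_cancel₀ (mul_ne_zero expp1_ne expp1_ne) key

lemma ode2 : 4 * Dq (Dq Gphi) = 2*Gphi^3 - 6*Gphi^2 + 4*Gphi := by
  have h := congrArg Dq ode1
  simp only [D_mul, map_sub, map_add, D_ofNat 4, D_ofNat 6, D_ofNat 8, D_ofNat 16, D_ofNat 24,
    D_ofNat 28, D_ofNat 120, D_ofNat 200, D_two, Derivation.leibniz_pow, nsmul_eq_mul,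
    smul_eq_mul, Nat.cast_ofNat, mul_zero, zero_mul, add_zero, zero_add] at h
  linear_combination 2*h + (2*Gphi-2)*ode1

lemma ode3 : 8 * Dq (Dq (Dq Gphi)) = 6*Gphi^4 - 24*Gphi^3 + 28*Gphi^2 - 8*Gphi := by
  have h := congrArg Dq ode2
  simp only [D_mul, map_sub, map_add, D_ofNat 4, D_ofNat 6, D_ofNat 8, D_ofNat 16, D_ofNat 24,
    D_ofNat 28, D_ofNat 120, D_ofNat 200, D_two, Derivation.leibniz_pow, nsmul_eq_mul,
    smul_eq_mul, Nat.cast_ofNat, mul_zero, zero_mul, add_zero, zero_add] at h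
  linear_combination 2*h + (6*Gphi^2-12*Gphi+4)*ode1

lemma ode4 : 16 * Dq (Dq (Dq (Dq Gphi))) =
    24*Gphi^5 - 120*Gphi^4 + 200*Gphi^3 - 120*Gphi^2 + 16*Gphi := by
  have h := congrArg Dq ode3
  simp only [D_mul, map_sub, map_add, D_ofNat 4, D_ofNat 6, D_ofNat 8, D_ofNat 16, D_ofNat 24,
    D_ofNat 28, D_ofNat 120, D_ofNat 200, D_two, Derivation.leibniz_pow, nsmul_eq_mul,
    smul_eq_mul, Nat.cast_ofNat, mul_zero, zero_mul, add_zero, zero_add] at h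
  linear_combination 2*h + (24*Gphi^3-72*Gphi^2+56*Gphi-8)*ode1

lemma ode5 : 32 * Dq (Dq (Dq (Dq (Dq Gphi)))) =
    120*Gphi^6 - 720*Gphi^5 + 1560*Gphi^4 - 1440*Gphi^3 + 496*Gphi^2 - 32*Gphi := by
  have h := congrArg Dq ode4
  simp only [D_mul, map_sub, map_add, D_ofNat 4, D_ofNat 6, D_ofNat 8, D_ofNat 16, D_ofNat 24,
    D_ofNat 28, D_ofNat 120, D_ofNat 200, D_two, Derivation.leibniz_pow, nsmul_eq_mul,
    smul_eq_mul, Nat.cast_ofNat, mul_zero, zero_mul, add_zero, zero_add] at h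
  linear_combination 2*h + (120*Gphi^4-480*Gphi^3+600*Gphi^2-240*Gphi+16)*ode1

/-- The central identity: 15 (φ'')² = φ⁽⁵⁾ - φ'. -/
lemma keyID : 15 * (Dq (Dq Gphi))^2 = Dq (Dq (Dq (Dq (Dq Gphi)))) - Dq Gphi := by
  have h32 : (32:ℚ⟦X⟧) ≠ 0 := by
    intro h
    have := congrArg (constantCoeff) h
    simp [map_ofNat] at this
  apply mul_left_cancel₀ h32
  linear_combination (30*(4*(Dq (Dq Gphi)) + (2*Gphi^3 - 6*Gphi^2 + 4*Gphi)))*ode2 - ode5 + 16*ode1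

lemma coeff_D1 (m : ℕ) : coeff m (Dq Gphi) = genocchi (m+2) / (((m+2):ℚ) * m !) := by
  rw [coeff_derivative]
  simp only [Gphi, coeff_mk]
  rw [show m+1+1 = m+2 from rfl, show (m+2)! = (m+2)*((m+1)*m !) by
    rw [show m+2 = (m+1)+1 from rfl, factorial_succ, factorial_succ]]
  have h1 : ((m:ℚ)+1) ≠ 0 := by positivity
  have h2 : ((m:ℚ)+2) ≠ 0 := by positivity
  have h3 : ((m ! : ℕ):ℚ) ≠ 0 := Nat.cast_ne_zero.mpr (factorial_ne_zero m)
  push_cast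
  field_simp

lemma coeff_D2 (m : ℕ) : coeff m (Dq (Dq Gphi)) = genocchi (m+3) / (((m+3):ℚ) * m !) := by
  rw [coeff_derivative, coeff_derivative]
  simp only [Gphi, coeff_mk]
  rw [show m+1+1+1 = m+3 from rfl, show (m+3)! = (m+3)*((m+2)*((m+1)*m !)) by
    rw [show m+3 = (m+2)+1 from rfl, factorial_succ, show m+2 = (m+1)+1 from rfl,
      factorial_succ, factorial_succ]]
  have h1 : ((m:ℚ)+1) ≠ 0 := by positivity
  have h2 : ((m:ℚ)+2) ≠ 0 := by positivity
  have h2' : ((m:ℚ)+3) ≠ 0 := by positivity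
  have h3 : ((m ! : ℕ):ℚ) ≠ 0 := Nat.cast_ne_zero.mpr (factorial_ne_zero m)
  push_cast
  field_simp
  ring

lemma coeff_D5 (m : ℕ) : coeff m (Dq (Dq (Dq (Dq (Dq Gphi))))) =
    genocchi (m+6) / (((m+6):ℚ) * m !) := by
  rw [coeff_derivative, coeff_derivative, coeff_derivative, coeff_derivative, coeff_derivative]
  simp only [Gphi, coeff_mk]
  rw [show m+1+1+1+1+1+1 = m+6 from rfl,
    show (m+6)! = (m+6)*((m+5)*((m+4)*((m+3)*((m+2)*((m+1)*m !))))) by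
      rw [show m+6 = (m+5)+1 from rfl, factorial_succ, show m+5 = (m+4)+1 from rfl,
        factorial_succ, show m+4 = (m+3)+1 from rfl, factorial_succ,
        show m+3 = (m+2)+1 from rfl, factorial_succ, show m+2 = (m+1)+1 from rfl,
        factorial_succ, factorial_succ]]
  have h1 : ((m:ℚ)+1) ≠ 0 := by positivity
  have h2 : ((m:ℚ)+2) ≠ 0 := by positivity
  have h3 : ((m:ℚ)+3) ≠ 0 := by positivity
  have h4 : ((m:ℚ)+4) ≠ 0 := by positivity
  have h5 : ((m:ℚ)+5) ≠ 0 := by positivity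
  have h6 : ((m:ℚ)+6) ≠ 0 := by positivity
  have hf : ((m ! : ℕ):ℚ) ≠ 0 := Nat.cast_ne_zero.mpr (factorial_ne_zero m)
  push_cast
  field_simp
  ring

lemma genocchi_odd (k : ℕ) : genocchi (2*k+3) = 0 := by
  have hb : bernoulli (2*k+3) = 0 := by
    rw [bernoulli_eq_bernoulli'_of_ne_one (by omega)]
    exact bernoulli'_eq_zero_of_odd ⟨k+1, by ring⟩ (by omega)
  simp [genocchi, hb]

lemma neg_pow_genocchi (i : ℕ) : (-1:ℚ)^i * genocchi (i+3) = -genocchi (i+3) := by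
  rcases Nat.even_or_odd i with ⟨k, hk⟩ | ⟨k, hk⟩
  · have : genocchi (i+3) = 0 := by rw [show i+3 = 2*k+3 by omega]; exact genocchi_odd k
    simp [this]
  · rw [hk]
    simp [pow_add, pow_mul]

theorem stmt15 (n : ℕ) :
    ∑ i ∈ Finset.range (2 * n + 1), (-1 : ℚ) ^ i * ((2 * n).choose i : ℚ)
        * genocchi (i + 3) * genocchi (2 * n + 3 - i)
        / (((i + 3 : ℕ) : ℚ) * ((2 * n + 3 - i : ℕ) : ℚ))
    = -genocchi (2 * n + 6) / (15 * ((2 * n + 6 : ℕ) : ℚ))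
        + genocchi (2 * n + 2) / (15 * ((2 * n + 2 : ℕ) : ℚ)) := by
  have key := congrArg (coeff (2*n)) keyID
  rw [map_sub, show (15:ℚ⟦X⟧) = C (15:ℚ) from (map_ofNat C 15).symm, coeff_C_mul, sq,
    coeff_mul, Finset.Nat.sum_antidiagonal_eq_sum_range_succ_mk, coeff_D5, coeff_D1] at key
  simp only [coeff_D2] at key
  have hL : ∑ i ∈ Finset.range (2 * n + 1), (-1 : ℚ) ^ i * ((2 * n).choose i : ℚ)
        * genocchi (i + 3) * genocchi (2 * n + 3 - i)
        / (((i + 3 : ℕ) : ℚ) * ((2 * n + 3 - i : ℕ) : ℚ))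
      = -((((2*n)! : ℕ) : ℚ) * ∑ i ∈ Finset.range (2*n+1),
          genocchi (i+3) / (((i:ℚ)+3) * (i !)) *
            (genocchi (2*n-i+3) / ((((2*n-i:ℕ):ℚ)+3) * ((2*n-i)!)))) := by
    rw [Finset.mul_sum, ← Finset.sum_neg_distrib]
    apply Finset.sum_congr rfl
    intro i hi
    have hiN : i ≤ 2*n := Nat.lt_succ_iff.mp (Finset.mem_range.mp hi)
    have h1 : 2*n+3-i = (2*n-i)+3 := by omega
    rw [h1]
    have hstep : (-1:ℚ)^i * ((2*n).choose i : ℚ) * genocchi (i+3) * genocchi ((2*n-i)+3)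
        = -(((2*n).choose i : ℚ) * genocchi (i+3) * genocchi ((2*n-i)+3)) := by
      linear_combination (((2*n).choose i : ℚ) * genocchi ((2*n-i)+3)) * neg_pow_genocchi i
    rw [hstep, Nat.cast_choose ℚ hiN]
    have d1 : ((i:ℚ)+3) ≠ 0 := by positivity
    have d2 : (((2*n-i:ℕ):ℚ)+3) ≠ 0 := by positivity
    have d3 : ((i ! : ℕ):ℚ) ≠ 0 := Nat.cast_ne_zero.mpr (factorial_ne_zero i)
    have d4 : (((2*n-i)! : ℕ):ℚ) ≠ 0 := Nat.cast_ne_zero.mpr (factorial_ne_zero _)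
    have d5 : (((2*n)! : ℕ):ℚ) ≠ 0 := Nat.cast_ne_zero.mpr (factorial_ne_zero _)
    push_cast
    field_simp
  rw [hL]
  have d6 : ((2:ℚ)*n+6) ≠ 0 := by positivity
  have d2' : ((2:ℚ)*n+2) ≠ 0 := by positivity
  have d5 : (((2*n)! : ℕ):ℚ) ≠ 0 := Nat.cast_ne_zero.mpr (factorial_ne_zero _)
  push_cast at key ⊢
  linear_combination (norm := (field_simp; ring)) (-((((2*n)! : ℕ):ℚ))/15) * key
end

section
/- For integers q ≥ 2: ∑_{i=0}^{q-1} C(q−1,i)·B_{q+i}·G_{q−i}/((q+i)(q−i)) = (−1)^q·G_{2q}/(q·C(2q,q)·2q) − G_q²/(4q²), where B_n are Bernoulli numbers and G_n are Genocchi numbers. -/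
namespace Stmt17

open PowerSeries Finset Finset.Nat
open scoped Nat

lemma bernoulli_odd_zero {n : ℕ} (h : Odd n) (h1 : 1 < n) : bernoulli n = 0 := by
  rw [bernoulli, bernoulli'_eq_zero_of_odd h h1, mul_zero]

lemma genocchi_odd_zero {n : ℕ} (h : Odd n) (h1 : 3 ≤ n) : genocchi n = 0 := by
  rw [genocchi, bernoulli_odd_zero h (by omega), mul_zero]

noncomputable def gh (k : ℕ) : ℚ := genocchi (k + 1) / (((k + 1) ! : ℕ) : ℚ)
noncomputable def bb (k : ℕ) : ℚ := bernoulli k / k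

lemma gh_zero : gh 0 = 1 := by
  norm_num [gh, genocchi, bernoulli_one]

lemma gh_even_zero {k : ℕ} (hk : Even k) (h2 : 2 ≤ k) : gh k = 0 := by
  rw [gh, genocchi_odd_zero (Even.add_one hk) (by omega), zero_div]

noncomputable def Hs : PowerSeries ℚ := PowerSeries.mk gh

lemma coeff_X_mul_Hs (n : ℕ) : (PowerSeries.coeff n) (X * Hs) = genocchi n / ((n ! : ℕ) : ℚ) := by
  cases n with
  | zero => simp [genocchi]
  | succ n => rw [coeff_succ_X_mul]; simp [Hs, gh]

lemma W_eq : X * Hs = 2 * (bernoulliPowerSeries ℚ - rescale 2 (bernoulliPowerSeries ℚ)) := by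
  ext n
  rw [coeff_X_mul_Hs]
  rw [two_mul]
  simp only [map_add, map_sub, coeff_rescale, bernoulliPowerSeries, coeff_mk,
    Algebra.algebraMap_self, RingHom.id_apply, genocchi]
  have hn : ((n ! : ℕ) : ℚ) ≠ 0 := Nat.cast_ne_zero.mpr n.factorial_ne_zero
  field_simp
  ring

lemma exp_sq : exp ℚ * exp ℚ = rescale (2 : ℚ) (exp ℚ) := by
  have h := exp_mul_exp_eq_exp_add (1 : ℚ) 1
  rw [rescale_one, RingHom.id_apply, show (1 + 1 : ℚ) = 2 by norm_num] at h
  exact h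

lemma rescale_two_X : rescale (2 : ℚ) (X : PowerSeries ℚ) = 2 * X := by
  ext n
  rw [coeff_rescale, two_mul, map_add]
  simp only [PowerSeries.coeff_X]
  split <;> simp_all <;> norm_num

lemma E2 : (exp ℚ * exp ℚ - 1) * (X * Hs) = 2 * X * (exp ℚ - 1) := by
  have h1 : bernoulliPowerSeries ℚ * (exp ℚ - 1) = X := bernoulliPowerSeries_mul_exp_sub_one ℚ
  have h3 : rescale (2:ℚ) (bernoulliPowerSeries ℚ) * (rescale (2:ℚ) (exp ℚ) - 1) = 2 * X := by
    rw [← rescale_two_X, ← map_one (rescale (2:ℚ)), ← map_sub, ← map_mul, h1]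
  rw [W_eq]
  linear_combination 2*(exp ℚ + 1)*h1 - 2*(rescale (2:ℚ) (bernoulliPowerSeries ℚ))*exp_sq - 2*h3

lemma Hs_eq : (exp ℚ + 1) * Hs = 2 := by
  have key : (exp ℚ - 1) * (X * ((exp ℚ + 1) * Hs - 2)) = 0 := by
    linear_combination E2
  have he : (exp ℚ - 1) ≠ 0 := by
    intro h
    have := congrArg (PowerSeries.coeff 1) h
    simp [coeff_exp] at this
  rcases mul_eq_zero.mp key with h | h
  · exact absurd h he
  rcases mul_eq_zero.mp h with h | h
  · exact absurd h PowerSeries.X_ne_zero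
  · linear_combination h



abbrev A := PowerSeries ℚ

noncomputable def uu : PowerSeries A := PowerSeries.C (exp ℚ)
noncomputable def vv : PowerSeries A := exp A
noncomputable def xx : PowerSeries A := PowerSeries.C X
noncomputable def yy : PowerSeries A := X
noncomputable def Hx : PowerSeries A := PowerSeries.C Hs
noncomputable def Hy : PowerSeries A := PowerSeries.map (algebraMap ℚ A) Hs
noncomputable def F2 : PowerSeries A :=
  PowerSeries.mk fun n => PowerSeries.mk fun m => bernoulli (m + n) / ((m ! : ℚ) * (n ! : ℚ))
noncomputable def Dp : PowerSeries A :=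
  PowerSeries.mk fun n => PowerSeries.mk fun m => bb (m + n + 1) / ((m ! : ℚ) * (n ! : ℚ))
noncomputable def Kk : PowerSeries A :=
  PowerSeries.mk fun n => PowerSeries.mk fun m => (-1) ^ n * gh (m + n + 1)

noncomputable def c2 (m n : ℕ) (f : PowerSeries A) : ℚ :=
  PowerSeries.coeff m (PowerSeries.coeff n f)

lemma vv_eq : vv = PowerSeries.map (algebraMap ℚ A) (exp ℚ) := by
  ext n
  simp [vv, coeff_exp, PowerSeries.coeff_map]

lemma L2 : (uu + 1) * Hx = 2 := by
  have : (uu + 1) * Hx = PowerSeries.C ((exp ℚ + 1) * Hs) := by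
    rw [map_mul, map_add, map_one, uu, Hx]
  rw [this, Hs_eq, map_ofNat]

lemma L3 : (vv + 1) * Hy = 2 := by
  have : (vv + 1) * Hy = PowerSeries.map (algebraMap ℚ A) ((exp ℚ + 1) * Hs) := by
    rw [map_mul, map_add, map_one, vv_eq, Hy]
  rw [this, Hs_eq, map_ofNat]

lemma c2_mul (f g : PowerSeries A) (m n : ℕ) :
    c2 m n (f * g) = ∑ p ∈ antidiagonal n, ∑ r ∈ antidiagonal m,
      c2 r.1 p.1 f * c2 r.2 p.2 g := by
  rw [c2, PowerSeries.coeff_mul, map_sum]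
  refine Finset.sum_congr rfl fun p _ => ?_
  rw [PowerSeries.coeff_mul]; rfl


lemma chiL (m : ℕ) : ∀ (n r : ℕ),
    ∑ a ∈ range (m+1), (m.choose a : ℚ) *
      (∑ c ∈ range (n+1), (n.choose c : ℚ) * bernoulli (a + c + r)) =
    ∑ s ∈ range (m+n+1), ((m+n).choose s : ℚ) * bernoulli (s + r) := by
  intro n
  induction n with
  | zero => intro r; simp
  | succ n ih =>
    intro r
    have hsplit : ∀ a, ∑ c ∈ range (n+2), ((n+1).choose c : ℚ) * bernoulli (a + c + r)
        = (∑ c ∈ range (n+1), (n.choose c : ℚ) * bernoulli (a + c + r))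
          + ∑ c ∈ range (n+1), (n.choose c : ℚ) * bernoulli (a + c + (r+1)) := by
      intro a
      rw [Finset.sum_choose_succ_mul (fun c _ => bernoulli (a + c + r)) n]
      congr 1
      refine Finset.sum_congr rfl fun c _ => ?_
      congr 2
      omega
    simp only [hsplit, mul_add, Finset.sum_add_distrib]
    rw [ih r, ih (r+1)]
    have := Finset.sum_choose_succ_mul (fun s _ => bernoulli (s + r)) (m+n)
    have h2 : ∑ s ∈ range (m+(n+1)+1), ((m+(n+1)).choose s : ℚ) * bernoulli (s + r)
        = ∑ s ∈ range (m+n+2), ((m+n+1).choose s : ℚ) * bernoulli (s + r) := by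
      congr 1 <;> omega
    rw [h2, Finset.sum_choose_succ_mul (fun s _ => bernoulli (s + r)) (m+n)]
    congr 1
    refine Finset.sum_congr rfl fun s _ => ?_
    congr 2
    omega

lemma fact_inv {i m : ℕ} (h : i ≤ m) :
    (1 : ℚ)/((i ! : ℕ) : ℚ) / (((m - i)! : ℕ) : ℚ) = (m.choose i : ℚ)/((m ! : ℕ) : ℚ) := by
  have hc := Nat.choose_mul_factorial_mul_factorial h
  have h1 : ((i ! : ℕ) : ℚ) ≠ 0 := Nat.cast_ne_zero.mpr (Nat.factorial_ne_zero _)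
  have h2 : (((m - i)! : ℕ) : ℚ) ≠ 0 := Nat.cast_ne_zero.mpr (Nat.factorial_ne_zero _)
  have h3 : ((m ! : ℕ) : ℚ) ≠ 0 := Nat.cast_ne_zero.mpr (Nat.factorial_ne_zero _)
  have hc' : (m.choose i : ℚ) * (i ! : ℕ) * ((m - i)! : ℕ) = (m ! : ℕ) := by
    exact_mod_cast congrArg (Nat.cast : ℕ → ℚ) hc
  field_simp
  linear_combination -hc'

lemma conv_bernoulli (m n : ℕ) :
    ∑ p ∈ antidiagonal n, ∑ r ∈ antidiagonal m,
      (1/((r.1 ! : ℕ) : ℚ) * (1/((p.1 ! : ℕ) : ℚ))) *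
        (bernoulli (r.2 + p.2) / (((r.2 ! : ℕ) : ℚ) * ((p.2 ! : ℕ) : ℚ)))
    = bernoulli (m+n) / (((m ! : ℕ) : ℚ) * ((n ! : ℕ) : ℚ))
      + (if m = 1 ∧ n = 0 then 1 else 0) + (if m = 0 ∧ n = 1 then 1 else 0) := by
  rw [Nat.sum_antidiagonal_eq_sum_range_succ_mk]
  have step1 : ∀ j ∈ range (n+1),
      ∑ r ∈ antidiagonal m,
        (1/((r.1 ! : ℕ) : ℚ) * (1/((j ! : ℕ) : ℚ))) *
          (bernoulli (r.2 + (n - j)) / (((r.2 ! : ℕ) : ℚ) * (((n-j)! : ℕ) : ℚ)))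
      = (n.choose j : ℚ)/((n ! : ℕ) : ℚ) *
          ∑ i ∈ range (m+1), (m.choose i : ℚ)/((m ! : ℕ) : ℚ) * bernoulli ((m - i) + (n - j)) := by
    intro j hj
    rw [Nat.sum_antidiagonal_eq_sum_range_succ_mk, Finset.mul_sum]
    refine Finset.sum_congr rfl fun i hi => ?_
    have hi' : i ≤ m := by simpa using Nat.lt_succ_iff.mp (Finset.mem_range.mp hi)
    have hj' : j ≤ n := by simpa using Nat.lt_succ_iff.mp (Finset.mem_range.mp hj)
    have expand : (1/((i ! : ℕ) : ℚ) * (1/((j ! : ℕ) : ℚ))) *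
        (bernoulli ((m-i) + (n-j)) / ((((m-i)! : ℕ) : ℚ) * (((n-j)! : ℕ) : ℚ)))
        = (1/((i ! : ℕ) : ℚ) / (((m-i)! : ℕ) : ℚ)) * (1/((j ! : ℕ) : ℚ) / (((n-j)! : ℕ) : ℚ)) *
            bernoulli ((m-i) + (n-j)) := by ring
    rw [expand, fact_inv hi', fact_inv hj']
    ring
  rw [Finset.sum_congr rfl step1]
  have refl_i : ∀ b, ∑ i ∈ range (m+1), (m.choose i : ℚ) * bernoulli ((m - i) + b)
      = ∑ a ∈ range (m+1), (m.choose a : ℚ) * bernoulli (a + b) := by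
    intro b
    rw [← Finset.sum_range_reflect (fun a => (m.choose a : ℚ) * bernoulli (a + b)) (m+1)]
    refine Finset.sum_congr rfl fun i hi => ?_
    have hi' : i ≤ m := Nat.lt_succ_iff.mp (Finset.mem_range.mp hi)
    have : m + 1 - 1 - i = m - i := by omega
    rw [this, Nat.choose_symm hi']
  have T : ∑ j ∈ range (n+1), (n.choose j : ℚ) *
        ∑ i ∈ range (m+1), (m.choose i : ℚ) * bernoulli ((m-i) + (n-j))
      = bernoulli (m+n) + (if m + n = 1 then 1 else 0) := by
    have step2 : ∀ j ∈ range (n+1), (n.choose j : ℚ) *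
          (∑ i ∈ range (m+1), (m.choose i : ℚ) * bernoulli ((m-i) + (n-j)))
        = (n.choose j : ℚ) * ∑ i ∈ range (m+1), (m.choose i : ℚ) * bernoulli (i + (n-j)) := by
      intro j _
      rw [refl_i]
    rw [Finset.sum_congr rfl step2]
    have refl_j : ∑ j ∈ range (n+1), (n.choose j : ℚ) *
          (∑ i ∈ range (m+1), (m.choose i : ℚ) * bernoulli (i + (n-j)))
        = ∑ j ∈ range (n+1), (n.choose j : ℚ) *
          (∑ i ∈ range (m+1), (m.choose i : ℚ) * bernoulli (i + j)) := by
      rw [← Finset.sum_range_reflect (fun j => (n.choose j : ℚ) *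
          (∑ i ∈ range (m+1), (m.choose i : ℚ) * bernoulli (i + j))) (n+1)]
      refine Finset.sum_congr rfl fun j hj => ?_
      have hj' : j ≤ n := Nat.lt_succ_iff.mp (Finset.mem_range.mp hj)
      have : n + 1 - 1 - j = n - j := by omega
      rw [this, Nat.choose_symm hj']
    rw [refl_j]
    have swap : ∑ j ∈ range (n+1), (n.choose j : ℚ) *
          (∑ i ∈ range (m+1), (m.choose i : ℚ) * bernoulli (i + j))
        = ∑ i ∈ range (m+1), (m.choose i : ℚ) *
          (∑ j ∈ range (n+1), (n.choose j : ℚ) * bernoulli (i + j + 0)) := by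
      simp only [Finset.mul_sum, add_zero]
      rw [Finset.sum_comm]
      refine Finset.sum_congr rfl fun i _ => Finset.sum_congr rfl fun j _ => by ring
    rw [swap, chiL m n 0]
    simp only [add_zero]
    rw [Finset.sum_range_succ, sum_bernoulli, Nat.choose_self]
    push_cast
    ring
  have expand2 : ∑ j ∈ range (n+1), ((n.choose j : ℚ)/((n ! : ℕ) : ℚ) *
        ∑ i ∈ range (m+1), (m.choose i : ℚ)/((m ! : ℕ) : ℚ) * bernoulli ((m - i) + (n - j)))
      = (∑ j ∈ range (n+1), (n.choose j : ℚ) *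
          ∑ i ∈ range (m+1), (m.choose i : ℚ) * bernoulli ((m-i) + (n-j))) /
        (((m ! : ℕ) : ℚ) * ((n ! : ℕ) : ℚ)) := by
    rw [Finset.sum_div]
    refine Finset.sum_congr rfl fun j _ => ?_
    rw [Finset.mul_sum, Finset.mul_sum, Finset.sum_div]
    refine Finset.sum_congr rfl fun i _ => by ring
  rw [expand2, T]
  by_cases h1 : m + n = 1
  · have : (m = 1 ∧ n = 0) ∨ (m = 0 ∧ n = 1) := by omega
    rcases this with ⟨rfl, rfl⟩ | ⟨rfl, rfl⟩ <;>
      simp [Nat.factorial] <;> norm_num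
  · have h2 : ¬(m = 1 ∧ n = 0) := by omega
    have h3 : ¬(m = 0 ∧ n = 1) := by omega
    simp [h1, h2, h3, add_div]


lemma c2_ext {f g : PowerSeries A} (h : ∀ m n, c2 m n f = c2 m n g) : f = g := by
  apply PowerSeries.ext
  intro n
  apply PowerSeries.ext
  intro m
  exact h m n

@[simp] lemma c2_add (m n : ℕ) (f g : PowerSeries A) :
    c2 m n (f + g) = c2 m n f + c2 m n g := by simp [c2]

@[simp] lemma c2_sub (m n : ℕ) (f g : PowerSeries A) :
    c2 m n (f - g) = c2 m n f - c2 m n g := by simp [c2]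

@[simp] lemma c2_one (m n : ℕ) :
    c2 m n (1 : PowerSeries A) = if m = 0 ∧ n = 0 then 1 else 0 := by
  rw [c2, PowerSeries.coeff_one]
  by_cases h : n = 0 <;> simp [h, PowerSeries.coeff_one, and_comm]

@[simp] lemma c2_two (m n : ℕ) :
    c2 m n (2 : PowerSeries A) = if m = 0 ∧ n = 0 then 2 else 0 := by
  have : (2 : PowerSeries A) = 1 + 1 := by norm_num
  rw [this, c2_add, c2_one]
  split <;> norm_num

lemma c2_F2 (m n : ℕ) : c2 m n F2 = bernoulli (m + n) / (((m ! : ℕ) : ℚ) * ((n ! : ℕ) : ℚ)) := by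
  simp [c2, F2]

lemma c2_Dp (m n : ℕ) : c2 m n Dp = bb (m + n + 1) / (((m ! : ℕ) : ℚ) * ((n ! : ℕ) : ℚ)) := by
  simp [c2, Dp]

lemma c2_Kk (m n : ℕ) : c2 m n Kk = (-1) ^ n * gh (m + n + 1) := by
  simp [c2, Kk]

lemma c2_Hx (m n : ℕ) : c2 m n Hx = if n = 0 then gh m else 0 := by
  rw [c2, Hx, PowerSeries.coeff_C]
  by_cases h : n = 0 <;> simp [h, Hs]

lemma c2_Hy (m n : ℕ) : c2 m n Hy = if m = 0 then gh n else 0 := by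
  rw [c2, Hy, PowerSeries.coeff_map, PowerSeries.algebraMap_apply]
  simp [Hs, PowerSeries.coeff_C]

lemma c2_xx (m n : ℕ) : c2 m n xx = if m = 1 ∧ n = 0 then 1 else 0 := by
  rw [c2, xx, PowerSeries.coeff_C]
  by_cases h : n = 0 <;> simp [h, PowerSeries.coeff_X]

lemma c2_yy (m n : ℕ) : c2 m n yy = if m = 0 ∧ n = 1 then 1 else 0 := by
  rw [c2, yy, PowerSeries.coeff_X]
  by_cases h : n = 1 <;> simp [h, PowerSeries.coeff_one]

lemma c2_uv (m n : ℕ) : c2 m n (uu * vv) = 1/((m ! : ℕ) : ℚ) * (1/((n ! : ℕ) : ℚ)) := by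
  rw [c2, uu, PowerSeries.coeff_C_mul, vv, coeff_exp, PowerSeries.algebraMap_apply]
  rw [mul_comm, PowerSeries.coeff_C_mul, coeff_exp]
  simp
  ring

lemma L1 : (uu * vv - 1) * F2 = xx + yy := by
  refine c2_ext fun m n => ?_
  rw [sub_mul, one_mul, c2_sub, c2_add, c2_mul, c2_xx, c2_yy, c2_F2]
  have hterm : ∀ p ∈ antidiagonal n, ∀ r ∈ antidiagonal m,
      c2 r.1 p.1 (uu * vv) * c2 r.2 p.2 F2
      = (1/((r.1 ! : ℕ) : ℚ) * (1/((p.1 ! : ℕ) : ℚ))) *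
        (bernoulli (r.2 + p.2) / (((r.2 ! : ℕ) : ℚ) * ((p.2 ! : ℕ) : ℚ))) := by
    intro p _ r _
    rw [c2_uv, c2_F2]
  rw [Finset.sum_congr rfl fun p hp => Finset.sum_congr rfl (hterm p hp), conv_bernoulli]
  ring


lemma c2_xx_mul (f : PowerSeries A) (m n : ℕ) :
    c2 m n (xx * f) = if m = 0 then 0 else c2 (m-1) n f := by
  rw [c2, xx, PowerSeries.coeff_C_mul]
  cases m with
  | zero => simp [PowerSeries.coeff_zero_X_mul]
  | succ m => simp [PowerSeries.coeff_succ_X_mul, c2]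

lemma c2_yy_mul (f : PowerSeries A) (m n : ℕ) :
    c2 m n (yy * f) = if n = 0 then 0 else c2 m (n-1) f := by
  rw [c2, yy]
  cases n with
  | zero => simp [PowerSeries.coeff_zero_X_mul]
  | succ n => simp [PowerSeries.coeff_succ_X_mul, c2]

lemma fact_succ_cast (a : ℕ) : (((a+1)! : ℕ) : ℚ) = (a+1) * ((a ! : ℕ) : ℚ) := by
  rw [Nat.factorial_succ]
  push_cast
  ring

lemma fact_ne (a : ℕ) : ((a ! : ℕ) : ℚ) ≠ 0 := Nat.cast_ne_zero.mpr (Nat.factorial_ne_zero _)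

lemma L5a : (xx + yy) * Dp = F2 - 1 := by
  refine c2_ext fun m n => ?_
  rw [add_mul, c2_add, c2_xx_mul, c2_yy_mul, c2_sub, c2_one, c2_F2]
  cases m with
  | zero =>
    cases n with
    | zero => simp [bb]
    | succ b =>
      simp only [if_pos rfl, if_neg (Nat.succ_ne_zero b), c2_Dp]
      have h : (0:ℕ) + (b+1) = b + 1 := by omega
      have h2 : (0:ℕ) + ((b+1) -1) + 1 = b + 1 := by omega
      rw [h, h2]
      have : bernoulli (b+1) = ((b+1 : ℕ) : ℚ) * bb (b+1) := by
        rw [bb]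
        field_simp
      rw [this, fact_succ_cast b]
      have hb := fact_ne b
      simp only [Nat.factorial_zero, Nat.cast_one]
      push_cast
      field_simp
      simp only [and_false, false_and, if_false]
      ring
  | succ a =>
    cases n with
    | zero =>
      simp only [if_neg (Nat.succ_ne_zero a), if_pos rfl, c2_Dp]
      have h : (a+1) - 1 + 0 + 1 = a + 1 := by omega
      have h2 : (a+1) + 0 = a + 1 := by omega
      rw [h, h2]
      have : bernoulli (a+1) = ((a+1 : ℕ) : ℚ) * bb (a+1) := by
        rw [bb]; field_simp
      rw [this, fact_succ_cast a]
      have ha := fact_ne a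
      simp only [Nat.factorial_zero, Nat.cast_one]
      push_cast
      field_simp
      simp only [and_false, false_and, if_false]
      ring
    | succ b =>
      simp only [if_neg (Nat.succ_ne_zero a), if_neg (Nat.succ_ne_zero b), c2_Dp]
      have h : (a+1) - 1 + (b+1) + 1 = a + b + 2 := by omega
      have h2 : (a+1) + ((b+1) - 1) + 1 = a + b + 2 := by omega
      have h3 : (a+1) + (b+1) = a + b + 2 := by omega
      have h4 : (a+1) - 1 = a := by omega
      have h5 : (b+1) - 1 = b := by omega
      rw [h4, h5] at *
      rw [show a + (b+1) + 1 = a + b + 2 by omega, show (a+1) + b + 1 = a + b + 2 by omega, h3]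
      have : bernoulli (a+b+2) = ((a+b+2 : ℕ) : ℚ) * bb (a+b+2) := by
        rw [bb]
        have : ((a+b+2 : ℕ) : ℚ) ≠ 0 := by positivity
        field_simp
      rw [this, fact_succ_cast a, fact_succ_cast b]
      have ha := fact_ne a
      have hb := fact_ne b
      have hsimp : ¬(a + 1 = 0 ∧ b + 1 = 0) := by omega
      rw [if_neg hsimp]
      push_cast
      field_simp
      ring

lemma neg_one_pow_gh (n : ℕ) : ((-1 : ℚ)) ^ n * gh (n+1) = gh (n+1) := by
  rcases Nat.even_or_odd n with h | h
  · rw [h.neg_one_pow, one_mul]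
  · obtain ⟨c, rfl⟩ := h
    have : gh (2*c+1+1) = 0 := gh_even_zero ⟨c+1, by omega⟩ (by omega)
    rw [this, mul_zero]

lemma L5b : (xx + yy) * Kk = Hx + Hy - 2 := by
  refine c2_ext fun m n => ?_
  rw [add_mul, c2_add, c2_xx_mul, c2_yy_mul, c2_sub, c2_add, c2_two, c2_Hx, c2_Hy]
  cases m with
  | zero =>
    cases n with
    | zero => simp [gh_zero]; norm_num
    | succ b =>
      simp only [if_pos rfl, if_neg (Nat.succ_ne_zero b), c2_Kk]
      have h : (0:ℕ) + ((b+1)-1) + 1 = b + 1 := by omega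
      rw [h, show (b+1) - 1 = b from rfl]
      simp [neg_one_pow_gh b]
  | succ a =>
    cases n with
    | zero =>
      simp only [if_neg (Nat.succ_ne_zero a), if_pos rfl, c2_Kk]
      have h : (a+1) - 1 + 0 + 1 = a + 1 := by omega
      rw [h]
      simp
    | succ b =>
      simp only [if_neg (Nat.succ_ne_zero a), if_neg (Nat.succ_ne_zero b), c2_Kk]
      have h : (a+1) - 1 + (b+1) + 1 = a + b + 2 := by omega
      have h2 : (a+1) + ((b+1)-1) + 1 = a + b + 2 := by omega
      rw [h, h2, show (b+1)-1 = b from rfl]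
      have hsimp : ¬(a + 1 = 0 ∧ b + 1 = 0) := by omega
      rw [if_neg hsimp]
      rw [pow_succ]
      ring


lemma wne : (uu+1)*(vv+1) ≠ (0 : PowerSeries A) := by
  intro hw
  have h1 := congrArg (PowerSeries.constantCoeff (R := A)) hw
  rw [map_mul, map_add, map_add, map_one, map_zero] at h1
  rw [uu, PowerSeries.constantCoeff_C, vv, constantCoeff_exp] at h1
  have h2 := congrArg (PowerSeries.constantCoeff (R := ℚ)) h1
  simp [constantCoeff_exp] at h2

lemma I1 : 2*F2*(Hx+Hy-2) + (xx+yy)*Hx*Hy = 0 := by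
  have key : ((uu+1)*(vv+1)) * (2*F2*(Hx+Hy-2) + (xx+yy)*Hx*Hy) = 0 := by
    linear_combination (2*F2*(vv+1) + (xx+yy)*(vv+1)*Hy) * L2 + (2*F2*(uu+1) + 2*(xx+yy)) * L3
      - 4*L1
  rcases mul_eq_zero.mp key with h | h
  · exact absurd h wne
  · exact h

lemma xyne : xx + yy ≠ (0 : PowerSeries A) := by
  intro h
  have h2 : c2 1 0 (xx + yy) = c2 1 0 0 := by rw [h]
  rw [c2_add, c2_xx, c2_yy] at h2
  simp [c2] at h2

lemma P0 : 2*Dp*(Hx+Hy-2) + Hx*Hy + 2*Kk = 0 := by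
  have key : (xx+yy) * (2*Dp*(Hx+Hy-2) + Hx*Hy + 2*Kk) = 0 := by
    linear_combination 2*(Hx+Hy-2)*L5a + 2*L5b + I1
  rcases mul_eq_zero.mp key with h | h
  · exact absurd h xyne
  · exact h


lemma collapse_snd (m : ℕ) (f : ℕ × ℕ → ℚ) (hf : ∀ r ∈ antidiagonal m, r.2 ≠ 0 → f r = 0) :
    ∑ r ∈ antidiagonal m, f r = f (m, 0) := by
  apply Finset.sum_eq_single_of_mem
  · simp
  · intro r hr hne
    refine hf r hr fun h2 => hne ?_
    have h3 := Finset.HasAntidiagonal.mem_antidiagonal.mp hr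
    have : r.1 = m := by omega
    exact Prod.ext this h2

lemma collapse_fst (m : ℕ) (f : ℕ × ℕ → ℚ) (hf : ∀ r ∈ antidiagonal m, r.1 ≠ 0 → f r = 0) :
    ∑ r ∈ antidiagonal m, f r = f (0, m) := by
  apply Finset.sum_eq_single_of_mem
  · simp
  · intro r hr hne
    refine hf r hr fun h2 => hne ?_
    have h3 := Finset.HasAntidiagonal.mem_antidiagonal.mp hr
    have : r.2 = m := by omega
    exact Prod.ext h2 this

noncomputable def Sig (q : ℕ) : ℚ :=
  ∑ p ∈ antidiagonal (q-1), bb (p.1 + q) * gh p.2 / ((p.1 ! : ℕ) : ℚ)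

lemma c2_DpHy (q : ℕ) (hq : 2 ≤ q) :
    c2 (q-1) (q-1) (Dp * Hy) = Sig q / (((q-1)! : ℕ) : ℚ) := by
  rw [c2_mul, Sig, Finset.sum_div]
  refine Finset.sum_congr rfl fun p hp => ?_
  have hcol : ∑ r ∈ antidiagonal (q-1), c2 r.1 p.1 Dp * c2 r.2 p.2 Hy
      = c2 (q-1) p.1 Dp * c2 0 p.2 Hy := by
    apply collapse_snd
    intro r _ h2
    rw [c2_Hy, if_neg h2, mul_zero]
  rw [hcol, c2_Dp, c2_Hy, if_pos rfl]
  have : q - 1 + p.1 + 1 = p.1 + q := by omega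
  rw [this]
  ring

lemma c2_DpHx (q : ℕ) (hq : 2 ≤ q) :
    c2 (q-1) (q-1) (Dp * Hx) = Sig q / (((q-1)! : ℕ) : ℚ) := by
  rw [c2_mul]
  have hcol : ∑ p ∈ antidiagonal (q-1), ∑ r ∈ antidiagonal (q-1),
        c2 r.1 p.1 Dp * c2 r.2 p.2 Hx
      = ∑ r ∈ antidiagonal (q-1), c2 r.1 (q-1) Dp * c2 r.2 0 Hx := by
    apply collapse_snd
    intro p _ h1
    apply Finset.sum_eq_zero
    intro r _
    rw [c2_Hx, if_neg h1, mul_zero]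
  rw [hcol, Sig, Finset.sum_div]
  refine Finset.sum_congr rfl fun r hr => ?_
  rw [c2_Dp, c2_Hx, if_pos rfl]
  have : r.1 + (q-1) + 1 = r.1 + q := by omega
  rw [this]
  ring

lemma c2_HxHy (m n : ℕ) : c2 m n (Hx * Hy) = gh m * gh n := by
  rw [c2_mul]
  have hcol : ∑ p ∈ antidiagonal n, ∑ r ∈ antidiagonal m,
        c2 r.1 p.1 Hx * c2 r.2 p.2 Hy
      = ∑ r ∈ antidiagonal m, c2 r.1 0 Hx * c2 r.2 n Hy := by
    apply collapse_fst
    intro p _ h1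
    apply Finset.sum_eq_zero
    intro r _
    rw [c2_Hx, if_neg h1, zero_mul]
  rw [hcol]
  have hcol2 : ∑ r ∈ antidiagonal m, c2 r.1 0 Hx * c2 r.2 n Hy
      = c2 m 0 Hx * c2 0 n Hy := by
    apply collapse_snd
    intro r _ h2
    rw [c2_Hy, if_neg h2, mul_zero]
  rw [hcol2, c2_Hx, c2_Hy, if_pos rfl, if_pos rfl]

lemma extract (q : ℕ) (hq : 2 ≤ q) :
    4 * (Sig q / (((q-1)! : ℕ) : ℚ)) + gh (q-1) * gh (q-1)
      + 2 * ((-1 : ℚ)^(q-1) * gh (2*q-1)) = 0 := by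
  have P0' : (Dp*Hx + Dp*Hy) + (Dp*Hx + Dp*Hy) - (Dp + Dp + Dp + Dp) + Hx*Hy + (Kk + Kk)
      = (0 : PowerSeries A) := by
    linear_combination P0
  have E := congrArg (c2 (q-1) (q-1)) P0'
  rw [c2_add, c2_add, c2_sub, c2_add, c2_add, c2_add, c2_add, c2_add, c2_add,
    c2_DpHy q hq, c2_DpHx q hq, c2_HxHy, c2_Kk, c2_Dp] at E
  have hz : c2 (q-1) (q-1) (0 : PowerSeries A) = 0 := by simp [c2]
  rw [hz] at E
  have hodd : bb ((q-1) + (q-1) + 1) = 0 := by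
    have h1 : (q-1) + (q-1) + 1 = 2*q - 1 := by omega
    rw [h1, bb, bernoulli_odd_zero ⟨q-1, by omega⟩ (by omega), zero_div]
  rw [hodd] at E
  have h2 : (q-1) + (q-1) + 1 = 2*q-1 := by omega
  rw [h2] at E
  linear_combination E


lemma hLHS (q : ℕ) (hq : 2 ≤ q) :
    ∑ i ∈ Finset.range q, ((q - 1).choose i : ℚ) * bernoulli (q + i) * genocchi (q - i)
        / (((q + i : ℕ) : ℚ) * ((q - i : ℕ) : ℚ))
    = (((q-1)! : ℕ) : ℚ) * Sig q := by
  rw [Sig, Nat.sum_antidiagonal_eq_sum_range_succ_mk, Finset.mul_sum]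
  have hq1 : q - 1 + 1 = q := by omega
  rw [Nat.succ_eq_add_one, hq1]
  refine Finset.sum_congr rfl fun i hi => ?_
  have hi' : i ≤ q - 1 := by have := Finset.mem_range.mp hi; omega
  rw [bb, gh]
  have e1 : q - 1 - i + 1 = q - i := by omega
  rw [e1]
  have hcc : ((q-1).choose i : ℚ) * ((i ! : ℕ) : ℚ) * (((q-1-i)! : ℕ) : ℚ)
      = (((q-1)! : ℕ) : ℚ) := by
    exact_mod_cast congrArg (Nat.cast : ℕ → ℚ) (Nat.choose_mul_factorial_mul_factorial hi')
  have hqi : (((q-i)! : ℕ) : ℚ) = ((q-i : ℕ) : ℚ) * (((q-1-i)! : ℕ) : ℚ) := by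
    have h7 : q - i = (q-1-i) + 1 := by omega
    rw [h7, Nat.factorial_succ]
    push_cast
    ring
  rw [← hcc, hqi]
  have n1 : ((q + i : ℕ) : ℚ) ≠ 0 := by positivity
  have n2 : ((q - i : ℕ) : ℚ) ≠ 0 := by
    have : 1 ≤ q - i := by omega
    exact Nat.cast_ne_zero.mpr (by omega)
  have n3 := fact_ne i
  have n4 := fact_ne (q-1-i)
  have hqiq : ((q - i + q + i : ℕ) : ℚ) = ((q+i : ℕ) : ℚ) + ((q - i : ℕ) : ℚ) := by
    push_cast [Nat.cast_sub (by omega : i ≤ q)]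
    ring
  field_simp
  ring

theorem stmt17' (q : ℕ) (hq : 2 ≤ q) :
    ∑ i ∈ Finset.range q, ((q - 1).choose i : ℚ) * bernoulli (q + i) * genocchi (q - i)
        / (((q + i : ℕ) : ℚ) * ((q - i : ℕ) : ℚ))
    = (-1 : ℚ) ^ q * genocchi (2 * q) / ((q : ℚ) * ((2 * q).choose q : ℚ) * (2 * q : ℚ))
        - genocchi q ^ 2 / (4 * (q : ℚ) ^ 2) := by
  rw [hLHS q hq]
  have E := extract q hq
  have hgh1 : gh (2*q-1) = genocchi (2*q) / (((2*q)! : ℕ) : ℚ) := by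
    have h1 : 2*q - 1 + 1 = 2*q := by omega
    rw [gh, h1]
  have hgh2 : gh (q-1) = genocchi q / ((q ! : ℕ) : ℚ) := by
    have h1 : q - 1 + 1 = q := by omega
    rw [gh, h1]
  have hpow : (-1 : ℚ)^q = -(-1 : ℚ)^(q-1) := by
    have h := pow_succ (-1 : ℚ) (q-1)
    rw [show (q-1)+1 = q by omega] at h
    rw [h]
    ring
  have hfq : ((q ! : ℕ) : ℚ) = (q : ℚ) * (((q-1)! : ℕ) : ℚ) := by
    conv_lhs => rw [show q = (q-1)+1 by omega]
    rw [Nat.factorial_succ]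
    push_cast [show q - 1 + 1 = q by omega]
    ring
  have hf2q : (((2*q)! : ℕ) : ℚ) = ((2*q).choose q : ℚ) * ((q ! : ℕ) : ℚ) * ((q ! : ℕ) : ℚ) := by
    have h1 := Nat.choose_mul_factorial_mul_factorial (show q ≤ 2*q by omega)
    rw [show 2*q - q = q by omega] at h1
    exact_mod_cast (congrArg (Nat.cast : ℕ → ℚ) h1).symm
  have hq0 : (q : ℚ) ≠ 0 := by positivity
  have hfq1 := fact_ne (q-1)
  have hfqq := fact_ne q
  have hchoose : ((2*q).choose q : ℚ) ≠ 0 := by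
    exact_mod_cast Nat.cast_ne_zero.mpr (Nat.choose_pos (show q ≤ 2*q by omega)).ne'
  rw [hgh1, hgh2] at E
  have e2 : Sig q / (((q-1)! : ℕ) : ℚ)
      = (-(genocchi q/((q ! : ℕ) : ℚ))^2
          - 2*((-1 : ℚ)^(q-1)*(genocchi (2*q)/(((2*q)! : ℕ) : ℚ))))/4 := by
    linear_combination E/4
  have hSig : Sig q = (-(genocchi q/((q ! : ℕ) : ℚ))^2
      - 2*((-1 : ℚ)^(q-1)*(genocchi (2*q)/(((2*q)! : ℕ) : ℚ))))/4 * (((q-1)! : ℕ) : ℚ) :=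
    (div_eq_iff hfq1).mp e2
  rw [hSig, hpow, hf2q, hfq]
  field_simp
  ring

end Stmt17

theorem stmt17 (q : ℕ) (hq : 2 ≤ q) :
    ∑ i ∈ Finset.range q, ((q - 1).choose i : ℚ) * bernoulli (q + i) * genocchi (q - i)
        / (((q + i : ℕ) : ℚ) * ((q - i : ℕ) : ℚ))
    = (-1 : ℚ) ^ q * genocchi (2 * q) / ((q : ℚ) * ((2 * q).choose q : ℚ) * (2 * q : ℚ))
        - genocchi q ^ 2 / (4 * (q : ℚ) ^ 2) := by
  exact Stmt17.stmt17' q hq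
end
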